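/- Let Ω₁, Ω₂ be finite sets, μ₁, ν₁ pmfs on Ω₁ with supp(ν₁) ⊆ supp(μ₁), μ₂, ν₂ pmfs on Ω₂ with supp(ν₂) ⊆ supp(μ₂), and f : Ω₁ → ℝ. Let ρ₁(ω₁) = ν₁(ω₁)/μ₁(ω₁) and ρ(ω₁,ω₂) = ρ₁(ω₁)·ν₂(ω₂)/μ₂(ω₂). Then under the product measure μ₁ ⊗ μ₂: Var(ρ₁(ω₁)·f(ω₁)) ≤ Var(ρ(ω₁,ω₂)·f(ω₁)). -/

import Mathlib

theorem pdis_term_variance_le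
    {Ω₁ Ω₂ : Type*} [Fintype Ω₁] [Fintype Ω₂]
    (μ₁ ν₁ : Ω₁ → ℝ) (μ₂ ν₂ : Ω₂ → ℝ) (f : Ω₁ → ℝ)
    (hμ₁0 : ∀ ω, 0 ≤ μ₁ ω) (hμ₁1 : ∑ ω, μ₁ ω = 1)
    (hν₁0 : ∀ ω, 0 ≤ ν₁ ω) (hν₁1 : ∑ ω, ν₁ ω = 1)
    (hμ₂0 : ∀ ω, 0 ≤ μ₂ ω) (hμ₂1 : ∑ ω, μ₂ ω = 1)
    (hν₂0 : ∀ ω, 0 ≤ ν₂ ω) (hν₂1 : ∑ ω, ν₂ ω = 1)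
    (hsupp₁ : ∀ ω, 0 < ν₁ ω → 0 < μ₁ ω)
    (hsupp₂ : ∀ ω, 0 < ν₂ ω → 0 < μ₂ ω)
    (ρ₁ : Ω₁ → ℝ) (hρ₁ : ∀ ω, ρ₁ ω = ν₁ ω / μ₁ ω)
    (ρ : Ω₁ × Ω₂ → ℝ) (hρ : ∀ p : Ω₁ × Ω₂, ρ p = ρ₁ p.1 * (ν₂ p.2 / μ₂ p.2)) :
    (∑ p : Ω₁ × Ω₂, (μ₁ p.1 * μ₂ p.2) * (ρ₁ p.1 * f p.1) ^ 2)
      - (∑ p : Ω₁ × Ω₂, (μ₁ p.1 * μ₂ p.2) * (ρ₁ p.1 * f p.1)) ^ 2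
    ≤ (∑ p : Ω₁ × Ω₂, (μ₁ p.1 * μ₂ p.2) * (ρ p * f p.1) ^ 2)
      - (∑ p : Ω₁ × Ω₂, (μ₁ p.1 * μ₂ p.2) * (ρ p * f p.1)) ^ 2 := by
  set r : Ω₂ → ℝ := fun ω => ν₂ ω / μ₂ ω with hr
  -- first moment of r under μ₂ is 1
  have hterm : ∀ ω, μ₂ ω * r ω = ν₂ ω := by
    intro ω
    rcases eq_or_lt_of_le (hμ₂0 ω) with h | h
    · have hν : ν₂ ω = 0 := by
        by_contra hne
        exact absurd (hsupp₂ ω (lt_of_le_of_ne (hν₂0 ω) (Ne.symm hne))).ne' (by rw [← h]; simp)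
      simp [hr, ← h, hν]
    · simp only [hr]; field_simp [h.ne']
  have h2mean : ∑ ω, μ₂ ω * r ω = 1 := by simp only [hterm, hν₂1]
  -- second moment of r under μ₂ is ≥ 1 (Cauchy–Schwarz)
  have h2sq : 1 ≤ ∑ ω, μ₂ ω * r ω ^ 2 := by
    have hcs := Finset.sum_sq_le_sum_mul_sum_of_sq_eq_mul (Finset.univ : Finset Ω₂)
      (r := fun ω => μ₂ ω * r ω) (f := μ₂) (g := fun ω => μ₂ ω * r ω ^ 2)
      (fun ω _ => hμ₂0 ω) (fun ω _ => mul_nonneg (hμ₂0 ω) (sq_nonneg _))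
      (fun ω _ => by ring)
    rw [h2mean, hμ₂1, one_pow, one_mul] at hcs
    exact hcs
  -- split product sums
  have key1 : ∀ g : Ω₁ → ℝ,
      ∑ p : Ω₁ × Ω₂, (μ₁ p.1 * μ₂ p.2) * g p.1 = ∑ ω, μ₁ ω * g ω := by
    intro g
    rw [Fintype.sum_prod_type]
    simp only [← Finset.sum_mul, ← Finset.mul_sum]
    rw [hμ₂1]; simp
  have key2 : ∀ g : Ω₁ → ℝ, ∀ h : Ω₂ → ℝ,
      ∑ p : Ω₁ × Ω₂, (μ₁ p.1 * μ₂ p.2) * (g p.1 * h p.2) =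
        (∑ ω, μ₁ ω * g ω) * (∑ ω, μ₂ ω * h ω) := by
    intro g h
    rw [Fintype.sum_prod_type, Finset.sum_mul_sum]
    exact Finset.sum_congr rfl fun a _ => Finset.sum_congr rfl fun b _ => by ring
  -- rewrite all four sums
  have e1 : ∑ p : Ω₁ × Ω₂, (μ₁ p.1 * μ₂ p.2) * (ρ₁ p.1 * f p.1) ^ 2
      = ∑ ω, μ₁ ω * (ρ₁ ω * f ω) ^ 2 := key1 (fun ω => (ρ₁ ω * f ω) ^ 2)
  have e2 : ∑ p : Ω₁ × Ω₂, (μ₁ p.1 * μ₂ p.2) * (ρ₁ p.1 * f p.1)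
      = ∑ ω, μ₁ ω * (ρ₁ ω * f ω) := key1 (fun ω => ρ₁ ω * f ω)
  have e3 : ∑ p : Ω₁ × Ω₂, (μ₁ p.1 * μ₂ p.2) * (ρ p * f p.1) ^ 2
      = (∑ ω, μ₁ ω * (ρ₁ ω * f ω) ^ 2) * (∑ ω, μ₂ ω * r ω ^ 2) := by
    rw [← key2 (fun ω => (ρ₁ ω * f ω) ^ 2) (fun ω => r ω ^ 2)]
    exact Finset.sum_congr rfl fun p _ => by rw [hρ p]; ring
  have e4 : ∑ p : Ω₁ × Ω₂, (μ₁ p.1 * μ₂ p.2) * (ρ p * f p.1)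
      = ∑ ω, μ₁ ω * (ρ₁ ω * f ω) := by
    rw [show ∑ p : Ω₁ × Ω₂, (μ₁ p.1 * μ₂ p.2) * (ρ p * f p.1)
        = (∑ ω, μ₁ ω * (ρ₁ ω * f ω)) * (∑ ω, μ₂ ω * r ω) from by
      rw [← key2 (fun ω => ρ₁ ω * f ω) r]
      exact Finset.sum_congr rfl fun p _ => by rw [hρ p]; ring]
    rw [h2mean, mul_one]
  rw [e1, e2, e3, e4]
  have hA : 0 ≤ ∑ ω, μ₁ ω * (ρ₁ ω * f ω) ^ 2 :=
    Finset.sum_nonneg fun ω _ => mul_nonneg (hμ₁0 ω) (sq_nonneg _)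
  nlinarith [mul_le_mul_of_nonneg_left h2sq hA]
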